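/- Let Γ be a finitely generated group and Z a uniformly recurrent subgroup of Γ. If there exists H ∈ Z such that H is coamenable, then every K ∈ Z is coamenable; that is, Z is coamenable. -/

import Mathlib

open scoped Classical

/-- Conjugation action of a group on its subgroups: `g • H = gHg⁻¹`. -/
def conjSub {Γ : Type*} [Group Γ] (g : Γ) (H : Subgroup Γ) : Subgroup Γ :=
  Subgroup.map (MulAut.conj g).toMonoidHom H

/-- The Chabauty-type topology on `Sub(Γ)`: the topology induced from the product
topology on `{0,1}^Γ` via `H ↦ (γ ↦ decide (γ ∈ H))`. -/
noncomputable instance chabauty {Γ : Type*} [Group Γ] : TopologicalSpace (Subgroup Γ) :=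
  TopologicalSpace.induced
    (fun H (g : Γ) => @decide (g ∈ H) (Classical.dec _)) inferInstance

/-- A uniformly recurrent subgroup: a nonempty, closed, conjugation-invariant subset of
`Sub(Γ)` on which every conjugation orbit is dense. -/
structure IsURS {Γ : Type*} [Group Γ] (Z : Set (Subgroup Γ)) : Prop where
  nonempty : Z.Nonempty
  closed : IsClosed Z
  invariant : ∀ g : Γ, ∀ H ∈ Z, conjSub g H ∈ Z
  minimal : ∀ H ∈ Z, ∀ K ∈ Z, K ∈ closure {L : Subgroup Γ | ∃ g : Γ, conjSub g H = L}

/-- A subgroup `H ≤ Γ` is coamenable if the action of `Γ` on `Γ/H` is amenable: there is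
a sequence of nonempty finite subsets `Fₖ ⊆ Γ/H` with `|g•Fₖ ∪ Fₖ|/|Fₖ| → 1` for all `g`. -/
noncomputable def Coamenable {Γ : Type*} [Group Γ] (H : Subgroup Γ) : Prop :=
  ∃ F : ℕ → Finset (Γ ⧸ H), (∀ k, (F k).Nonempty) ∧
    ∀ g : Γ, Filter.Tendsto
      (fun k => ((((F k).image (fun x => g • x)) ∪ F k).card : ℝ) / ((F k).card : ℝ))
      Filter.atTop (nhds 1)

section helpers
variable {Γ : Type*} [Group Γ]

lemma mem_conjSub {g x : Γ} {K : Subgroup Γ} : x ∈ conjSub g K ↔ g⁻¹ * x * g ∈ K := by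
  constructor
  · rintro ⟨y, hy, rfl⟩
    simpa [MulAut.conj_apply, mul_assoc] using hy
  · intro h
    exact ⟨g⁻¹ * x * g, h, by simp [MulAut.conj_apply]; group⟩

/-- From Chabauty closure membership, extract a member of `A` agreeing with `L`
on any prescribed finite set. -/
lemma exists_agree {A : Set (Subgroup Γ)} {L : Subgroup Γ} (hL : L ∈ closure A) (Q : Finset Γ) :
    ∃ M ∈ A, ∀ x ∈ Q, (x ∈ M ↔ x ∈ L) := by
  set e : Subgroup Γ → Γ → Bool := fun H g => @decide (g ∈ H) (Classical.dec _) with he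
  have hcont : Continuous e := continuous_induced_dom
  set U : Set (Subgroup Γ) := e ⁻¹' ((Q : Set Γ).pi (fun x => {e L x})) with hU
  have hUopen : IsOpen U :=
    hcont.isOpen_preimage _ (isOpen_set_pi Q.finite_toSet (fun _ _ => isOpen_discrete _))
  have hLU : L ∈ U := fun x _ => rfl
  obtain ⟨M, hMU, hMA⟩ := mem_closure_iff.1 hL U hUopen hLU
  refine ⟨M, hMA, fun x hx => ?_⟩
  have := hMU x hx
  simp only [Set.mem_singleton_iff] at this
  exact decide_eq_decide.mp this

/-- Two images have equal cardinality when the induced equivalences on `T` coincide. -/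
lemma card_image_eq_of_iff {α β γ : Type*} [DecidableEq β] [DecidableEq γ]
    (T : Finset α) (f : α → β) (f' : α → γ)
    (h : ∀ x ∈ T, ∀ y ∈ T, (f x = f y ↔ f' x = f' y)) :
    (T.image f).card = (T.image f').card := by
  induction T using Finset.induction_on with
  | empty => simp
  | insert a T ha ih =>
    rw [Finset.image_insert, Finset.image_insert]
    have hmem : f a ∈ T.image f ↔ f' a ∈ T.image f' := by
      simp only [Finset.mem_image]
      constructor
      · rintro ⟨x, hx, hfx⟩
        exact ⟨x, hx, ((h x (Finset.mem_insert_of_mem hx) a (Finset.mem_insert_self a T)).1 hfx)⟩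
      · rintro ⟨x, hx, hfx⟩
        exact ⟨x, hx, ((h x (Finset.mem_insert_of_mem hx) a (Finset.mem_insert_self a T)).2 hfx)⟩
    have ih' := ih (fun x hx y hy =>
      h x (Finset.mem_insert_of_mem hx) y (Finset.mem_insert_of_mem hy))
    by_cases hc : f a ∈ T.image f
    · rw [Finset.insert_eq_self.2 hc, Finset.insert_eq_self.2 (hmem.1 hc), ih']
    · rw [Finset.card_insert_of_notMem hc,
        Finset.card_insert_of_notMem (fun hc' => hc (hmem.2 hc')), ih']

/-- Transfer of cardinalities of images in quotients, with a twist by `g` on the right. -/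
lemma card_image_quot (T : Finset Γ) (L₁ L₂ : Subgroup Γ) (g : Γ)
    (h : ∀ x ∈ T, ∀ y ∈ T, (x⁻¹ * y ∈ L₁ ↔ g⁻¹ * (x⁻¹ * y) * g ∈ L₂)) :
    (T.image (QuotientGroup.mk : Γ → Γ ⧸ L₁)).card
      = (T.image (fun x => (QuotientGroup.mk (x * g) : Γ ⧸ L₂))).card := by
  apply card_image_eq_of_iff
  intro x hx y hy
  rw [QuotientGroup.eq, QuotientGroup.eq]
  have : (x * g)⁻¹ * (y * g) = g⁻¹ * (x⁻¹ * y) * g := by group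
  rw [this]
  exact h x hx y hy

end helpers

section folner
variable {Γ : Type*} [Group Γ] {K : Subgroup Γ}

lemma smul_image_sdiff (a : Γ) (X Y : Finset (Γ ⧸ K)) :
    ((X \ Y).image (a • ·)) = X.image (a • ·) \ Y.image (a • ·) :=
  Finset.image_sdiff _ _ (MulAction.injective a)

/-- The word-length bound: boundary under `g` is controlled by boundaries under generators. -/
lemma sdiff_bound (S : Finset Γ) {g : Γ} (hg : g ∈ Subgroup.closure (S : Set Γ)) :
    ∃ n : ℕ, ∀ (F : Finset (Γ ⧸ K)) (m : ℝ),
      (∀ s ∈ S, (((F.image (s • ·)) \ F).card : ℝ) ≤ m) →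
      (((F.image (g • ·)) \ F).card : ℝ) ≤ n * m := by
  induction hg using Subgroup.closure_induction with
  | mem s hs =>
      exact ⟨1, fun F m hm => by simpa using hm s hs⟩
  | one =>
      refine ⟨0, fun F m hm => ?_⟩
      have : F.image ((1 : Γ) • ·) = F := by simp
      simp [this]
  | mul a b _ _ iha ihb =>
      obtain ⟨na, hna⟩ := iha
      obtain ⟨nb, hnb⟩ := ihb
      refine ⟨na + nb, fun F m hm => ?_⟩
      have himg : F.image ((a * b) • ·) = (F.image (b • ·)).image (a • ·) := by
        rw [Finset.image_image]; exact Finset.image_congr (fun x _ => (mul_smul a b x))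
      have hsub : F.image ((a * b) • ·) \ F ⊆
          (F.image ((a * b) • ·) \ F.image (a • ·)) ∪ (F.image (a • ·) \ F) := by
        intro x hx
        rcases Finset.mem_sdiff.1 hx with ⟨hx1, hx2⟩
        by_cases h : x ∈ F.image (a • ·)
        · exact Finset.mem_union_right _ (Finset.mem_sdiff.2 ⟨h, hx2⟩)
        · exact Finset.mem_union_left _ (Finset.mem_sdiff.2 ⟨hx1, h⟩)
      have hcard1 : (F.image ((a * b) • ·) \ F.image (a • ·)).card
          = ((F.image (b • ·)) \ F).card := by
        rw [himg, ← smul_image_sdiff]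
        exact Finset.card_image_of_injective _ (MulAction.injective a)
      calc (((F.image ((a * b) • ·)) \ F).card : ℝ)
          ≤ ((F.image ((a * b) • ·) \ F.image (a • ·)) ∪ (F.image (a • ·) \ F)).card := by
            exact_mod_cast Nat.cast_le.2 (Finset.card_le_card hsub)
        _ ≤ ((F.image ((a * b) • ·) \ F.image (a • ·)).card : ℝ)
              + ((F.image (a • ·) \ F).card : ℝ) := by
            exact_mod_cast Nat.cast_le.2 (Finset.card_union_le _ _)
        _ = (((F.image (b • ·)) \ F).card : ℝ) + ((F.image (a • ·) \ F).card : ℝ) := by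
            rw [hcard1]
        _ ≤ nb * m + na * m := add_le_add (hnb F m hm) (hna F m hm)
        _ = (↑(na + nb)) * m := by push_cast; ring
  | inv a _ iha =>
      obtain ⟨n, hn⟩ := iha
      refine ⟨n, fun F m hm => ?_⟩
      have hcards : (F.image (a • ·)).card = F.card :=
        Finset.card_image_of_injective _ (MulAction.injective a)
      have h1 : F.image (a⁻¹ • ·) \ F = (F \ F.image (a • ·)).image (a⁻¹ • ·) := by
        rw [smul_image_sdiff]
        congr 1
        rw [Finset.image_image]
        have : F.image ((a⁻¹ • ·) ∘ (a • ·)) = F.image id := by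
          apply Finset.image_congr; intro x _; simp [inv_smul_smul]
        simp only [this, Finset.image_id]
      have h2 : (F.image (a⁻¹ • ·) \ F).card = ((F.image (a • ·)) \ F).card := by
        rw [h1, Finset.card_image_of_injective _ (MulAction.injective a⁻¹)]
        exact Finset.card_sdiff_comm hcards.symm
      rw [h2]; exact hn F m hm

/-- Coamenability from per-`ε` Følner sets for a finite generating set. -/
lemma coam_of_folner (K : Subgroup Γ) (S : Finset Γ)
    (hS : Subgroup.closure (S : Set Γ) = ⊤)
    (h : ∀ ε : ℝ, 0 < ε → ∃ F : Finset (Γ ⧸ K), F.Nonempty ∧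
      ∀ s ∈ S, (((F.image (s • ·)) \ F).card : ℝ) ≤ ε * F.card) :
    ∃ F : ℕ → Finset (Γ ⧸ K), (∀ k, (F k).Nonempty) ∧
      ∀ g : Γ, Filter.Tendsto
        (fun k => ((((F k).image (fun x => g • x)) ∪ F k).card : ℝ) / ((F k).card : ℝ))
        Filter.atTop (nhds 1) := by
  have hchoice : ∀ k : ℕ, ∃ F : Finset (Γ ⧸ K), F.Nonempty ∧
      ∀ s ∈ S, (((F.image (s • ·)) \ F).card : ℝ) ≤ (1 / (k + 1)) * F.card :=
    fun k => h (1 / (k + 1)) (by positivity)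
  choose F hFne hFfol using hchoice
  refine ⟨F, hFne, fun g => ?_⟩
  obtain ⟨n, hn⟩ := sdiff_bound (K := K) S (hS ▸ Subgroup.mem_top g)
  have hpos : ∀ k, (0 : ℝ) < (F k).card := fun k => by
    exact_mod_cast (hFne k).card_pos
  have hub : ∀ k, ((((F k).image (fun x => g • x)) ∪ F k).card : ℝ) / ((F k).card : ℝ)
      ≤ 1 + n * (1 / (k + 1)) := by
    intro k
    have hcard : ((((F k).image (fun x => g • x)) ∪ F k).card : ℝ)
        = (((F k).image (g • ·) \ F k).card : ℝ) + ((F k).card : ℝ) := by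
      exact_mod_cast (Finset.card_sdiff_add_card _ _).symm
    have hb := hn (F k) (1 / (k + 1) * (F k).card) (fun s hs => hFfol k s hs)
    rw [div_le_iff₀ (hpos k), hcard]
    calc (((F k).image (g • ·) \ F k).card : ℝ) + ((F k).card : ℝ)
        ≤ n * (1 / (k + 1) * (F k).card) + (F k).card := by linarith [hb]
      _ = (1 + n * (1 / (k + 1))) * (F k).card := by ring
  have hlb : ∀ k, 1 ≤ ((((F k).image (fun x => g • x)) ∪ F k).card : ℝ) / ((F k).card : ℝ) := by
    intro k
    rw [le_div_iff₀ (hpos k), one_mul]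
    exact_mod_cast Nat.cast_le.2 (Finset.card_le_card (Finset.subset_union_right))
  have htend : Filter.Tendsto (fun k : ℕ => 1 + (n : ℝ) * (1 / (k + 1)))
      Filter.atTop (nhds 1) := by
    have h0 : Filter.Tendsto (fun k : ℕ => (1 : ℝ) / (k + 1)) Filter.atTop (nhds 0) :=
      tendsto_one_div_add_atTop_nhds_zero_nat
    have : Filter.Tendsto (fun k : ℕ => (1 : ℝ) + (n : ℝ) * (1 / (k + 1)))
        Filter.atTop (nhds (1 + (n : ℝ) * 0)) :=
      Filter.Tendsto.add tendsto_const_nhds (h0.const_mul (n : ℝ))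
    simpa using this
  exact tendsto_of_tendsto_of_tendsto_of_le_of_le tendsto_const_nhds htend hlb hub

end folner

/-- if one member of a URS of a finitely generated group is coamenable,
then every member is, i.e. the URS is coamenable. -/
theorem coamenable_of_mem_coamenable
    {Γ : Type*} [Group Γ] [Group.FG Γ]
    (Z : Set (Subgroup Γ)) (hZ : IsURS Z)
    (H : Subgroup Γ) (hH : H ∈ Z) (hcoam : Coamenable H) :
    ∀ K ∈ Z, Coamenable K := by
  intro K hK
  obtain ⟨S0, hS0, hS0fin⟩ := Group.fg_iff.mp ‹Group.FG Γ›
  set S : Finset Γ := hS0fin.toFinset with hSdef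
  have hS : Subgroup.closure (S : Set Γ) = ⊤ := by
    rw [hSdef, Set.Finite.coe_toFinset]; exact hS0
  refine coam_of_folner K S hS ?_
  intro ε hε
  -- Step 1: a single Følner set for H, good for all s ∈ S simultaneously
  obtain ⟨FHs, hne, htd⟩ := hcoam
  have hev : ∀ᶠ k in Filter.atTop, ∀ s ∈ S,
      ((((FHs k).image (fun x => s • x)) ∪ FHs k).card : ℝ) / ((FHs k).card : ℝ) < 1 + ε :=
    (Filter.eventually_all_finset S).2
      (fun s _ => (htd s).eventually_lt_const (lt_add_of_pos_right 1 hε))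
  obtain ⟨k, hk⟩ := hev.exists
  set FH := FHs k with hFHdef
  have hFHne : FH.Nonempty := hne k
  have hFHpos : (0 : ℝ) < FH.card := by exact_mod_cast hFHne.card_pos
  have hFol : ∀ s ∈ S, (((FH.image (s • ·)) \ FH).card : ℝ) ≤ ε * FH.card := by
    intro s hs
    have h1 := hk s hs
    rw [div_lt_iff₀ hFHpos] at h1
    have h2 : ((FH.image (s • ·) \ FH).card : ℝ) + FH.card
        = ((FH.image (s • ·) ∪ FH).card : ℝ) := by
      exact_mod_cast Finset.card_sdiff_add_card _ _
    nlinarith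
  -- Step 2: lift to Γ, find a conjugate of K agreeing with H on the relevant finite set
  obtain ⟨T, hTdef⟩ : ∃ T : Finset Γ, T = FH.image Quotient.out := ⟨_, rfl⟩
  have hT : T.image (QuotientGroup.mk : Γ → Γ ⧸ H) = FH := by
    rw [hTdef, Finset.image_image]
    have : ∀ q ∈ FH, (QuotientGroup.mk ∘ Quotient.out) q = id q := fun q _ => by
      simp [QuotientGroup.out_eq']
    rw [Finset.image_congr this, Finset.image_id]
  obtain ⟨T2, hT2def⟩ : ∃ T2 : Finset Γ, T2 = T ∪ S.biUnion (fun s => T.image (s * ·)) :=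
    ⟨_, rfl⟩
  obtain ⟨Q, hQdef⟩ : ∃ Q : Finset Γ, Q = (T2 ×ˢ T2).image (fun p => p.1⁻¹ * p.2) := ⟨_, rfl⟩
  obtain ⟨M, ⟨g, rfl⟩, hag⟩ := exists_agree (hZ.minimal K hK H hH) Q
  have key : ∀ x ∈ T2, ∀ y ∈ T2, (x⁻¹ * y ∈ H ↔ g⁻¹ * (x⁻¹ * y) * g ∈ K) := by
    intro x hx y hy
    have hQmem : x⁻¹ * y ∈ Q := by
      rw [hQdef]
      exact Finset.mem_image.2 ⟨(x, y), Finset.mem_product.2 ⟨hx, hy⟩, rfl⟩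
    rw [← mem_conjSub]
    exact (hag _ hQmem).symm
  -- Step 3: transfer the Følner set to Γ ⧸ K
  obtain ⟨FK, hFKdef⟩ :
      ∃ FK : Finset (Γ ⧸ K), FK = T.image (fun x => (QuotientGroup.mk (x * g) : Γ ⧸ K)) :=
    ⟨_, rfl⟩
  have hTne : T.Nonempty := by rw [hTdef]; exact hFHne.image _
  refine ⟨FK, by rw [hFKdef]; exact hTne.image _, ?_⟩
  have hTsub : T ⊆ T2 := hT2def ▸ Finset.subset_union_left
  have cardT : FH.card = FK.card := by
    rw [← hT, hFKdef]
    exact card_image_quot T H K g (fun x hx y hy => key x (hTsub hx) y (hTsub hy))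
  intro s hs
  obtain ⟨Ts, hTsdef⟩ : ∃ Ts : Finset Γ, Ts = T.image (s * ·) ∪ T := ⟨_, rfl⟩
  have hTssub : Ts ⊆ T2 := by
    rw [hTsdef, hT2def]
    apply Finset.union_subset
    · intro x hx
      exact Finset.mem_union_right _ (Finset.mem_biUnion.2 ⟨s, hs, hx⟩)
    · exact Finset.subset_union_left
  have cardTs : (Ts.image (QuotientGroup.mk : Γ → Γ ⧸ H)).card
      = (Ts.image (fun x => (QuotientGroup.mk (x * g) : Γ ⧸ K))).card :=
    card_image_quot Ts H K g (fun x hx y hy => key x (hTssub hx) y (hTssub hy))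
  have idH : Ts.image (QuotientGroup.mk : Γ → Γ ⧸ H) = FH.image (s • ·) ∪ FH := by
    rw [hTsdef, Finset.image_union, ← hT]
    congr 1
    rw [Finset.image_image, Finset.image_image]
    rfl
  have idK : Ts.image (fun x => (QuotientGroup.mk (x * g) : Γ ⧸ K))
      = FK.image (s • ·) ∪ FK := by
    rw [hTsdef, Finset.image_union, hFKdef]
    congr 1
    rw [Finset.image_image, Finset.image_image]
    exact Finset.image_congr (fun x _ => by simp [mul_assoc])
  have eH : (FH.image (s • ·) \ FH).card + FH.card = (FH.image (s • ·) ∪ FH).card :=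
    Finset.card_sdiff_add_card _ _
  have eK : (FK.image (s • ·) \ FK).card + FK.card = (FK.image (s • ·) ∪ FK).card :=
    Finset.card_sdiff_add_card _ _
  have cardsd : (FK.image (s • ·) \ FK).card = (FH.image (s • ·) \ FH).card := by
    have := cardTs
    rw [idH, idK] at this
    have cT : FH.card = FK.card := cardT
    omega
  have : ((FK.image (s • ·) \ FK).card : ℝ) ≤ ε * FK.card := by
    rw [cardsd, ← cardT]
    exact hFol s hs
  exact this
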